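/- Let (V, d) be a metric space and let P̂, R̂ be finite multisets of V, and let S be a finite set of points with P̂ ⊆ S. Let Ô ⊆ S \ P̂ minimize dist(Ô, R̂) over all subsets of S \ P̂ of size |R̂|. Then for any multiset T ⊆ S of size |Ô ∪ P̂|, we have dist(Ô ∪ P̂, R̂ ∪ P̂) ≤ dist(T, R̂ ∪ P̂). -/

import Mathlib

/-- The minimum cost of a perfect matching between two equal-size multisets
in a metric space. -/
noncomputable def mdist {V : Type*} [MetricSpace V] (A B : Multiset V) : ℝ :=
  sInf {c : ℝ | ∃ l₁ l₂ : List V, (l₁ : Multiset V) = A ∧ (l₂ : Multiset V) = B ∧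
    c = (List.zipWith dist l₁ l₂).sum}

section helpers

variable {V : Type*} [MetricSpace V]

/-- The cost of a matching given as a multiset of pairs. -/
noncomputable def mcost (M : Multiset (V × V)) : ℝ := (M.map fun p => dist p.1 p.2).sum

lemma mcost_cons (p : V × V) (M : Multiset (V × V)) :
    mcost (p ::ₘ M) = dist p.1 p.2 + mcost M := by simp [mcost]

lemma zipWith_dist_sum_nonneg : ∀ (l₁ l₂ : List V), 0 ≤ (List.zipWith dist l₁ l₂).sum := by
  intro l₁
  induction l₁ with
  | nil => intro l₂; simp
  | cons a l ih =>
    intro l₂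
    cases l₂ with
    | nil => simp
    | cons b l₂ =>
      simp only [List.zipWith_cons_cons, List.sum_cons]
      have := ih l₂
      have := dist_nonneg (x := a) (y := b)
      linarith

lemma mdist_bddBelow (A B : Multiset V) :
    BddBelow {c : ℝ | ∃ l₁ l₂ : List V, (l₁ : Multiset V) = A ∧ (l₂ : Multiset V) = B ∧
      c = (List.zipWith dist l₁ l₂).sum} := by
  refine ⟨0, ?_⟩
  rintro c ⟨l₁, l₂, -, -, rfl⟩
  exact zipWith_dist_sum_nonneg l₁ l₂

lemma mdist_set_nonempty (A B : Multiset V) :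
    Set.Nonempty {c : ℝ | ∃ l₁ l₂ : List V, (l₁ : Multiset V) = A ∧ (l₂ : Multiset V) = B ∧
      c = (List.zipWith dist l₁ l₂).sum} :=
  ⟨_, A.toList, B.toList, by simp, by simp, rfl⟩

lemma zipWith_dist_map_self (l : List (V × V)) :
    List.zipWith dist (l.map Prod.fst) (l.map Prod.snd) = l.map fun p => dist p.1 p.2 := by
  induction l with
  | nil => rfl
  | cons a l ih => simp [ih]

lemma coe_toList_map {α β : Type*} (f : α → β) (M : Multiset α) :
    ((M.toList.map f : List β) : Multiset β) = M.map f := by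
  rw [← Multiset.map_coe, Multiset.coe_toList]

lemma mdist_le_mcost {A B : Multiset V} (M : Multiset (V × V))
    (h1 : M.map Prod.fst = A) (h2 : M.map Prod.snd = B) : mdist A B ≤ mcost M := by
  apply csInf_le (mdist_bddBelow A B)
  refine ⟨M.toList.map Prod.fst, M.toList.map Prod.snd, ?_, ?_, ?_⟩
  · rw [coe_toList_map, h1]
  · rw [coe_toList_map, h2]
  · rw [zipWith_dist_map_self, mcost, ← Multiset.sum_coe, ← Multiset.map_coe,
      Multiset.coe_toList]

lemma map_zip_dist : ∀ (l₁ l₂ : List V),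
    (l₁.zip l₂).map (fun p => dist p.1 p.2) = List.zipWith dist l₁ l₂ := by
  intro l₁
  induction l₁ with
  | nil => intro l₂; rfl
  | cons a l ih =>
    intro l₂
    cases l₂ with
    | nil => rfl
    | cons b l₂ => simp [ih]

/-- Cancellation: if both sides of a matching contain a common multiset `C`,
there is a matching of the residuals of no larger cost. -/
lemma cancel_matching : ∀ (C A B : Multiset V) (M : Multiset (V × V)),
    M.map Prod.fst = A + C → M.map Prod.snd = B + C →
    ∃ M', M'.map Prod.fst = A ∧ M'.map Prod.snd = B ∧ mcost M' ≤ mcost M := by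
  intro C
  induction C using Multiset.induction with
  | empty =>
    intro A B M h1 h2
    exact ⟨M, by simpa using h1, by simpa using h2, le_rfl⟩
  | cons c C ih =>
    intro A B M h1 h2
    have hc : c ∈ M.map Prod.fst := by rw [h1]; simp
    obtain ⟨p, hpM, hpc⟩ := Multiset.mem_map.mp hc
    obtain ⟨N, rfl⟩ := Multiset.exists_cons_of_mem hpM
    rw [Multiset.map_cons, hpc, Multiset.add_cons] at h1
    have hN1 : N.map Prod.fst = A + C := (Multiset.cons_inj_right c).mp h1
    rw [Multiset.map_cons] at h2
    by_cases hy : p.2 = c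
    · -- p = (c, c): drop it and recurse
      have hN2 : N.map Prod.snd = B + C := by
        rw [hy, Multiset.add_cons] at h2
        exact (Multiset.cons_inj_right c).mp h2
      obtain ⟨M', hf, hs, hle⟩ := ih A B N hN1 hN2
      refine ⟨M', hf, hs, hle.trans ?_⟩
      rw [mcost_cons, hpc, hy, dist_self]
      linarith
    · -- c occurs among the second coordinates of N
      have hc2 : c ∈ N.map Prod.snd := by
        have hmem : c ∈ (p.2 ::ₘ N.map Prod.snd) := by rw [h2]; simp
        rcases Multiset.mem_cons.mp hmem with h | h
        · exact absurd h.symm hy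
        · exact h
      obtain ⟨q, hqN, hqc⟩ := Multiset.mem_map.mp hc2
      obtain ⟨N₀, rfl⟩ := Multiset.exists_cons_of_mem hqN
      rw [Multiset.map_cons, hqc] at h2
      rw [Multiset.map_cons] at hN1
      have hS : p.2 ::ₘ N₀.map Prod.snd = B + C := by
        rw [Multiset.add_cons, Multiset.cons_swap] at h2
        exact (Multiset.cons_inj_right c).mp h2
      obtain ⟨M', hf, hs, hle⟩ := ih A B ((q.1, p.2) ::ₘ N₀)
        (by rw [Multiset.map_cons]; exact hN1) (by rw [Multiset.map_cons]; exact hS)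
      refine ⟨M', hf, hs, hle.trans ?_⟩
      rw [mcost_cons, mcost_cons, mcost_cons, hpc, hqc]
      have htri : dist q.1 p.2 ≤ dist q.1 c + dist c p.2 := dist_triangle q.1 c p.2
      have h1' : dist c p.2 = dist p.1 p.2 := by rw [hpc]
      have h2' : dist q.1 c = dist q.1 q.2 := by rw [hqc]
      simp only at htri h1' h2' ⊢
      linarith

/-- Discarding: if the right side has extra points `C`, we can drop the partners. -/
lemma discard_matching : ∀ (C A B : Multiset V) (M : Multiset (V × V)),
    M.map Prod.fst = A → M.map Prod.snd = B + C →
    ∃ A' M', A' ≤ A ∧ M'.map Prod.fst = A' ∧ M'.map Prod.snd = B ∧ mcost M' ≤ mcost M := by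
  intro C
  induction C using Multiset.induction with
  | empty =>
    intro A B M h1 h2
    exact ⟨A, M, le_rfl, h1, by simpa using h2, le_rfl⟩
  | cons c C ih =>
    intro A B M h1 h2
    have hc : c ∈ M.map Prod.snd := by rw [h2]; simp
    obtain ⟨p, hpM, hpc⟩ := Multiset.mem_map.mp hc
    obtain ⟨N, rfl⟩ := Multiset.exists_cons_of_mem hpM
    rw [Multiset.map_cons, hpc, Multiset.add_cons] at h2
    have hN2 : N.map Prod.snd = B + C := (Multiset.cons_inj_right c).mp h2
    rw [Multiset.map_cons] at h1
    obtain ⟨A', M', hA', hf, hs, hle⟩ := ih (N.map Prod.fst) B N rfl hN2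
    have hsub : N.map Prod.fst ≤ A := by
      rw [← h1]; exact Multiset.le_cons_self _ _
    refine ⟨A', M', hA'.trans hsub, hf, hs, hle.trans ?_⟩
    rw [mcost_cons]
    have := dist_nonneg (x := p.1) (y := p.2)
    linarith

/-- Adding a common multiset to both sides does not increase the matching distance. -/
lemma mdist_add_le (A B Q : Multiset V) (hcard : Multiset.card A = Multiset.card B) :
    mdist (A + Q) (B + Q) ≤ mdist A B := by
  apply le_csInf (mdist_set_nonempty A B)
  rintro c ⟨l₁, l₂, h1, h2, rfl⟩
  apply csInf_le (mdist_bddBelow _ _)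
  have coeadd : ∀ (l : List V) (X : Multiset V), (l : Multiset V) = X →
      ((l ++ Q.toList : List V) : Multiset V) = X + Q := by
    intro l X hX
    rw [← hX, show ((l ++ Q.toList : List V) : Multiset V) = ↑l + ↑Q.toList from rfl,
      Multiset.coe_toList]
  refine ⟨l₁ ++ Q.toList, l₂ ++ Q.toList, coeadd l₁ A h1, coeadd l₂ B h2, ?_⟩
  have hlen : l₁.length = l₂.length := by
    have e : Multiset.card (l₁ : Multiset V) = Multiset.card (l₂ : Multiset V) := by
      rw [h1, h2, hcard]
    simpa using e
  rw [List.zipWith_append hlen, List.sum_append]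
  have hz : (List.zipWith dist Q.toList Q.toList).sum = 0 := by
    rw [List.zipWith_self]
    apply List.sum_eq_zero
    intro x hx
    obtain ⟨a, -, rfl⟩ := List.mem_map.mp hx
    exact dist_self a
  rw [hz, add_zero]

end helpers

/-- If `Ô ⊆ S \ P̂` minimizes the matching distance to the request multiset `R̂`
among all subsets of `S \ P̂` of size `|R̂|`, then for any `T ⊆ S` of size
`|Ô ∪ P̂|`, `dist(Ô ∪ P̂, R̂ ∪ P̂) ≤ dist(T, R̂ ∪ P̂)`. -/
theorem stmt2 {V : Type*} [MetricSpace V] [DecidableEq V] (S P O : Finset V) (R : Multiset V)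
    (hPS : P ⊆ S) (hO : O ⊆ S \ P) (hOcard : O.card = Multiset.card R)
    (hmin : ∀ O' : Finset V, O' ⊆ S \ P → O'.card = Multiset.card R →
      mdist O.val R ≤ mdist O'.val R) :
    ∀ T : Finset V, T ⊆ S → T.card = O.card + P.card →
      mdist (O.val + P.val) (R + P.val) ≤ mdist T.val (R + P.val) := by
  intro T hTS hTcard
  apply le_csInf (mdist_set_nonempty _ _)
  rintro c ⟨l₁, l₂, h1, h2, rfl⟩
  -- lengths agree
  have hlen : l₁.length = l₂.length := by
    have e : Multiset.card (l₁ : Multiset V) = Multiset.card (l₂ : Multiset V) := by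
      rw [h1, h2, Multiset.card_add]
      show T.card = Multiset.card R + P.card
      rw [hTcard, hOcard, add_comm]
    simpa using e
  -- form the matching as a multiset of pairs
  set M : Multiset (V × V) := ((l₁.zip l₂ : List (V × V)) : Multiset (V × V)) with hM
  have hMfst : M.map Prod.fst = T.val := by
    rw [hM, Multiset.map_coe, List.map_fst_zip hlen.le, h1]
  have hMsnd : M.map Prod.snd = R + P.val := by
    rw [hM, Multiset.map_coe, List.map_snd_zip hlen.ge, h2]
  have hMcost : mcost M = (List.zipWith dist l₁ l₂).sum := by
    rw [mcost, hM, Multiset.map_coe, Multiset.sum_coe, map_zip_dist]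
  -- split off the common part C = T ∩ P
  set C : Multiset V := T.val ∩ P.val with hC
  have hsplit1 : M.map Prod.fst = (T \ P).val + C := by
    rw [hMfst, Finset.sdiff_val, hC, Multiset.sub_add_inter]
  have hsplit2 : M.map Prod.snd = (R + (P \ T).val) + C := by
    rw [hMsnd, Finset.sdiff_val, hC, Multiset.inter_comm, add_assoc,
      Multiset.sub_add_inter]
  obtain ⟨M₂, h2f, h2s, h2le⟩ := cancel_matching C (T \ P).val (R + (P \ T).val) M
    hsplit1 hsplit2
  obtain ⟨A', M', hA', h3f, h3s, h3le⟩ := discard_matching (P \ T).val (T \ P).val R M₂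
    h2f h2s
  -- A' is a nodup multiset, so a Finset
  have hA'nodup : A'.Nodup := Multiset.nodup_of_le hA' (T \ P).nodup
  set O' : Finset V := ⟨A', hA'nodup⟩ with hO'
  have hO'sub : O' ⊆ S \ P := by
    intro a ha
    have haT : a ∈ T \ P := Multiset.subset_of_le hA' ha
    rw [Finset.mem_sdiff] at haT ⊢
    exact ⟨hTS haT.1, haT.2⟩
  have hO'card : O'.card = Multiset.card R := by
    have e1 : Multiset.card A' = Multiset.card (M'.map Prod.fst) := by rw [h3f]
    have e2 : Multiset.card (M'.map Prod.snd) = Multiset.card R := by rw [h3s]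
    rw [Multiset.card_map] at e1 e2
    exact e1.trans e2
  have key : mdist O.val R ≤ mcost M := by
    calc mdist O.val R ≤ mdist O'.val R := hmin O' hO'sub hO'card
    _ ≤ mcost M' := mdist_le_mcost M' h3f h3s
    _ ≤ mcost M₂ := h3le
    _ ≤ mcost M := h2le
  calc mdist (O.val + P.val) (R + P.val) ≤ mdist O.val R := by
        apply mdist_add_le
        exact hOcard
  _ ≤ mcost M := key
  _ = (List.zipWith dist l₁ l₂).sum := hMcost
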